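/- Let w, u ∈ W with w ≤ wu in the Bruhat order, and let λ be a dominant integral weight. Then w(λ − uλ) is a nonnegative integer linear combination of positive roots. -/

import Mathlib

open RealInnerProductSpace

noncomputable section

variable {V : Type*} [NormedAddCommGroup V] [InnerProductSpace ℝ V] [FiniteDimensional ℝ V]

/-- Orthogonal reflection of `V` in the hyperplane orthogonal to `α`. -/
def reflRoot (α : V) : V ≃ₗᵢ[ℝ] V := Submodule.reflection (ℝ ∙ α)ᗮ

/-- The inversion set `Φ_w = w⁻¹Δ⁻ ∩ Δ⁺ = {α ∈ Δ⁺ | w α ∈ Δ⁻}`, where `Δ⁻ = -Δ⁺`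
(so `w α ∈ Δ⁻ ↔ -(w α) ∈ Δ⁺`). -/
def invSet (pos : Set V) (w : V ≃ₗᵢ[ℝ] V) : Set V := {α | α ∈ pos ∧ -(w α) ∈ pos}

/-- The length of `w`, i.e. the number of inversions of `w`. -/
def invLen (pos : Set V) (w : V ≃ₗᵢ[ℝ] V) : ℕ := (invSet pos w).ncard

/-- The Bruhat order on the Weyl group: the reflexive-transitive closure of the relation
`x ⋖ x * s_α` (right multiplication by the reflection in a root `α`) whenever the length
(= number of inversions) increases. -/
def bruhatLE (roots pos : Set V) : (V ≃ₗᵢ[ℝ] V) → (V ≃ₗᵢ[ℝ] V) → Prop :=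
  Relation.ReflTransGen
    (fun x y => (∃ α ∈ roots, y = x * reflRoot α) ∧ invLen pos x < invLen pos y)

/-- A reduced crystallographic root system in the real inner product space `V`, together with
a fixed choice of positive roots `pos` (the negative roots being `-pos`). -/
structure RootSystemCtx (V : Type*) [NormedAddCommGroup V] [InnerProductSpace ℝ V]
    [FiniteDimensional ℝ V] where
  /-- the set of roots `Δ` -/
  roots : Set V
  /-- the set of positive roots `Δ⁺` -/
  pos : Set V
  finite : roots.Finite
  nonzero : ∀ α ∈ roots, α ≠ (0 : V)
  /-- reduced: the only multiples of a root which are roots are `±α` -/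
  reduced : ∀ α ∈ roots, ∀ t : ℝ, t • α ∈ roots → t = 1 ∨ t = -1
  /-- crystallographic: `⟨β, α∨⟩ ∈ ℤ` for all roots `α`, `β` -/
  crystallographic : ∀ α ∈ roots, ∀ β ∈ roots, ∃ z : ℤ, 2 * ⟪β, α⟫ / ⟪α, α⟫ = (z : ℝ)
  /-- the set of roots is stable under the reflection in each root -/
  reflect_mem : ∀ α ∈ roots, ∀ β ∈ roots, reflRoot α β ∈ roots
  pos_subset : pos ⊆ roots
  /-- every root is positive or negative -/
  mem_pos_or : ∀ α ∈ roots, α ∈ pos ∨ -α ∈ pos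
  /-- no root is both positive and negative -/
  not_pos_and_neg : ∀ α ∈ pos, -α ∉ pos
  /-- positivity is closed under addition -/
  pos_add : ∀ α ∈ pos, ∀ β ∈ pos, α + β ∈ roots → α + β ∈ pos

namespace RootSystemCtx

variable {V : Type*} [NormedAddCommGroup V] [InnerProductSpace ℝ V] [FiniteDimensional ℝ V]

/-- The Weyl group `W`: the subgroup of the isometry group of `V` generated by the
reflections in the roots. -/
def weylGroup (C : RootSystemCtx V) : Subgroup (V ≃ₗᵢ[ℝ] V) :=
  Subgroup.closure {g | ∃ α ∈ C.roots, g = reflRoot α}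

/-- The simple roots: the positive roots which are not the sum of two positive roots. -/
def simpleRoots (C : RootSystemCtx V) : Set V :=
  {α ∈ C.pos | ¬ ∃ β ∈ C.pos, ∃ γ ∈ C.pos, α = β + γ}

/-- A weight `l` is dominant integral if `⟨l, α∨⟩` is a nonnegative integer for every
simple root `α`. -/
def IsDominant (C : RootSystemCtx V) (l : V) : Prop :=
  ∀ α ∈ C.simpleRoots, ∃ k : ℕ, 2 * ⟪l, α⟫ / ⟪α, α⟫ = (k : ℝ)

end RootSystemCtx


section Aux

variable {V : Type*} [NormedAddCommGroup V] [InnerProductSpace ℝ V] [FiniteDimensional ℝ V]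

/-- `⟨x, y∨⟩ = 2⟪x,y⟫/⟪y,y⟫`. -/
def pairC (x y : V) : ℝ := 2 * ⟪x, y⟫ / ⟪y, y⟫

omit [FiniteDimensional ℝ V] in
lemma reflRoot_apply (α x : V) : reflRoot α x = x - pairC x α • α := by
  rw [reflRoot, Submodule.reflection_orthogonal_apply, Submodule.reflection_singleton_apply]
  rw [pairC, real_inner_self_eq_norm_sq, real_inner_comm]
  rw [mul_div_assoc, two_mul, add_smul, two_smul]
  simp only [RCLike.ofReal_real_eq_id, id_eq]
  abel

omit [FiniteDimensional ℝ V] in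
lemma reflRoot_self (α : V) : reflRoot α α = -α :=
  Submodule.reflection_orthogonalComplement_singleton_eq_neg α

omit [FiniteDimensional ℝ V] in
lemma reflRoot_neg (α : V) : reflRoot (-α) = reflRoot α := by
  unfold reflRoot
  congr 1
  rw [show (-α) = ((-1:ℝ) • α) by simp,
    Submodule.span_singleton_smul_eq (isUnit_one.neg) α]

omit [FiniteDimensional ℝ V] in
lemma reflRoot_invol (α : V) (x : V) : reflRoot α (reflRoot α x) = x :=
  Submodule.reflection_reflection _ x

omit [FiniteDimensional ℝ V] in
lemma reflRoot_inner (α x y : V) : ⟪reflRoot α x, reflRoot α y⟫ = ⟪x, y⟫ :=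
  (reflRoot α).inner_map_map x y

omit [FiniteDimensional ℝ V] in
lemma reflRoot_inner' (α x y : V) : ⟪x, reflRoot α y⟫ = ⟪reflRoot α x, y⟫ := by
  conv_lhs => rw [← reflRoot_invol α x]
  rw [reflRoot_inner]

omit [FiniteDimensional ℝ V] in
lemma multiset_exists_inner_pos {y : V} {m : Multiset V} (h : 0 < ⟪y, m.sum⟫) :
    ∃ x ∈ m, 0 < ⟪y, x⟫ := by
  induction m using Multiset.induction with
  | empty => simp at h
  | cons a s ih =>
    rw [Multiset.sum_cons, inner_add_right] at h
    rcases lt_or_ge 0 ⟪y, a⟫ with hc | hc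
    · exact ⟨a, Multiset.mem_cons_self a s, hc⟩
    · obtain ⟨x, hx, hx2⟩ := ih (by linarith)
      exact ⟨x, Multiset.mem_cons_of_mem hx, hx2⟩

namespace RootSystemCtx

variable (C : RootSystemCtx V)

lemma pos_finite : C.pos.Finite := C.finite.subset C.pos_subset

lemma inner_self_pos {α : V} (hα : α ∈ C.roots) : 0 < ⟪α, α⟫ :=
  lt_of_le_of_ne real_inner_self_nonneg (Ne.symm (inner_self_ne_zero.2 (C.nonzero α hα)))

lemma pairC_int {β α : V} (hβ : β ∈ C.roots) (hα : α ∈ C.roots) :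
    ∃ z : ℤ, pairC β α = z := C.crystallographic α hα β hβ

lemma pairC_pos_iff {x α : V} (hα : α ∈ C.roots) : 0 < pairC x α ↔ 0 < ⟪x, α⟫ := by
  have hs := C.inner_self_pos hα
  rw [pairC, div_pos_iff]
  constructor
  · rintro (⟨h, -⟩ | ⟨-, h⟩) <;> linarith
  · intro h; left; constructor <;> linarith

lemma pairC_neg_iff {x α : V} (hα : α ∈ C.roots) : pairC x α < 0 ↔ ⟪x, α⟫ < 0 := by
  have hs := C.inner_self_pos hα
  rw [pairC, div_neg_iff]
  constructor
  · rintro (⟨-, h⟩ | ⟨h, -⟩) <;> linarith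
  · intro h; right; constructor <;> linarith

lemma neg_mem_roots {α : V} (hα : α ∈ C.roots) : -α ∈ C.roots := by
  have := C.reflect_mem α hα α hα
  rwa [reflRoot_self] at this

lemma pos_dichotomy {α : V} (hα : α ∈ C.roots) (h : α ∉ C.pos) : -α ∈ C.pos :=
  (C.mem_pos_or α hα).resolve_left h

lemma not_proportional {α β : V} (hα : α ∈ C.roots) (hβ : β ∈ C.roots)
    (h1 : α ≠ β) (h2 : α ≠ -β) (t : ℝ) : α ≠ t • β := by
  intro h
  rcases C.reduced β hβ t (h ▸ hα) with ht | ht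
  · exact h1 (by rw [h, ht, one_smul])
  · exact h2 (by rw [h, ht]; simp)

/-- strict Cauchy-Schwarz for non-proportional roots -/
lemma pairC_mul_lt_four {α β : V} (hα : α ∈ C.roots) (hβ : β ∈ C.roots)
    (h1 : α ≠ β) (h2 : α ≠ -β) : pairC α β * pairC β α < 4 := by
  have hβ0 : β ≠ 0 := C.nonzero β hβ
  have hα0 : α ≠ 0 := C.nonzero α hα
  have hnb : (0:ℝ) < ‖β‖ := norm_pos_iff.2 hβ0
  have hna : (0:ℝ) < ‖α‖ := norm_pos_iff.2 hα0
  have key : ⟪α, β⟫ ^ 2 < (‖α‖ * ‖β‖) ^ 2 := by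
    have hinv : ∀ c : ℝ, ‖β‖ • α = c • β → α = (c / ‖β‖) • β := by
      intro c h
      have h' : (‖β‖)⁻¹ • (‖β‖ • α) = (‖β‖)⁻¹ • (c • β) := by rw [h]
      rw [smul_smul, smul_smul, inv_mul_cancel₀ hnb.ne', one_smul] at h'
      rw [h', div_eq_inv_mul, mul_comm]
    have h1' : ⟪α, β⟫ < ‖α‖ * ‖β‖ := by
      rw [inner_lt_norm_mul_iff_real]
      intro h
      exact C.not_proportional hα hβ h1 h2 (‖α‖ / ‖β‖) (hinv _ h)
    have h2' : ⟪-α, β⟫ < ‖-α‖ * ‖β‖ := by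
      rw [inner_lt_norm_mul_iff_real]
      intro h
      rw [norm_neg, smul_neg, neg_eq_iff_eq_neg, ← neg_smul] at h
      exact C.not_proportional hα hβ h1 h2 (-‖α‖ / ‖β‖) (hinv _ h)
    rw [inner_neg_left, norm_neg] at h2'
    nlinarith
  rw [pairC, pairC, real_inner_self_eq_norm_sq, real_inner_self_eq_norm_sq,
    div_mul_div_comm, div_lt_iff₀ (by positivity)]
  have key2 : ⟪β, α⟫ ^ 2 < (‖α‖ * ‖β‖) ^ 2 := by
    first | rwa [real_inner_comm β α] | rwa [real_inner_comm α β]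
  nlinarith [key2]

/-- if two roots make an obtuse angle, their sum is a root -/
lemma sum_mem_roots {α β : V} (hα : α ∈ C.roots) (hβ : β ∈ C.roots)
    (hinner : ⟪α, β⟫ < 0) (hne : α ≠ -β) : α + β ∈ C.roots := by
  have hαβ : α ≠ β := by
    intro h; rw [h] at hinner; exact absurd hinner (not_lt.2 (le_of_lt (C.inner_self_pos hβ)))
  obtain ⟨za, hza⟩ := C.pairC_int hα hβ
  obtain ⟨zb, hzb⟩ := C.pairC_int hβ hα
  have hza_neg : za ≤ -1 := by
    have hlt : pairC α β < 0 := (C.pairC_neg_iff hβ).2 hinner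
    rw [hza] at hlt
    have : za < 0 := by exact_mod_cast hlt
    omega
  have hzb_neg : zb ≤ -1 := by
    have hlt : pairC β α < 0 := (C.pairC_neg_iff hα).2 (by rwa [real_inner_comm])
    rw [hzb] at hlt
    have : zb < 0 := by exact_mod_cast hlt
    omega
  have h4 : za * zb < 4 := by
    have := C.pairC_mul_lt_four hα hβ hαβ hne
    rw [hza, hzb] at this
    exact_mod_cast this
  have hcase : za = -1 ∨ zb = -1 := by
    by_contra hc
    push_neg at hc
    have h1 : za ≤ -2 := by omega
    have h2 : zb ≤ -2 := by omega
    nlinarith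
  rcases hcase with hc | hc
  · -- pairC α β = -1, use reflection in β
    have := C.reflect_mem β hβ α hα
    rw [reflRoot_apply, hza, hc] at this
    simpa using this
  · -- pairC β α = -1, use reflection in α
    have := C.reflect_mem α hα β hβ
    rw [reflRoot_apply, hzb, hc] at this
    rw [add_comm]
    simpa using this

/-- two positive roots cannot sum to a nonpositive multiple of a positive root -/
lemma no_neg_sum : ∀ m : ℕ, ∀ δ ∈ C.pos, ∀ μ ∈ C.pos, ∀ ν ∈ C.pos,
    δ + μ = -(m : ℝ) • ν → False := by
  intro m
  induction m with
  | zero =>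
    intro δ hδ μ hμ ν hν h
    simp only [Nat.cast_zero, neg_zero, zero_smul] at h
    exact C.not_pos_and_neg δ hδ ((eq_neg_of_add_eq_zero_right h) ▸ hμ)
  | succ m ih =>
    intro δ hδ μ hμ ν hν h
    have hν2 := C.inner_self_pos (C.pos_subset hν)
    have hsum : ⟪δ, ν⟫ + ⟪μ, ν⟫ < 0 := by
      have : ⟪δ + μ, ν⟫ = -((m:ℝ)+1) * ⟪ν, ν⟫ := by
        rw [h]; push_cast [real_inner_smul_left]; ring
      rw [inner_add_left] at this
      nlinarith
    have claim : ∀ δ' μ' : V, δ' ∈ C.pos → μ' ∈ C.pos →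
        δ' + μ' = -((m:ℝ)+1) • ν → ⟪δ', ν⟫ < 0 → False := by
      intro δ' μ' hδ' hμ' h' hneg
      have hne : δ' ≠ -ν := fun he => C.not_pos_and_neg ν hν (he ▸ hδ')
      have hroot : δ' + ν ∈ C.roots :=
        C.sum_mem_roots (C.pos_subset hδ') (C.pos_subset hν) hneg hne
      have hposs : δ' + ν ∈ C.pos := C.pos_add δ' hδ' ν hν hroot
      apply ih (δ' + ν) hposs μ' hμ' ν hν
      have h2 : δ' + ν + μ' = (δ' + μ') + ν := by abel
      rw [h2, h']
      module
    have hcast : δ + μ = -((m:ℝ)+1) • ν := by rw [h]; push_cast; ring_nf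
    rcases lt_or_ge ⟪δ, ν⟫ 0 with hc | hc
    · exact claim δ μ hδ hμ hcast hc
    · exact claim μ δ hμ hδ (by rw [← hcast]; abel) (by linarith)

/-- if `δ` is an inversion of `s_α`, then `⟨δ, α∨⟩ ≥ 1` -/
lemma pairC_ge_one_of_inv {α δ : V} (hα : α ∈ C.pos) (hδ : δ ∈ C.pos)
    (h : -(reflRoot α δ) ∈ C.pos) : ∃ z : ℤ, pairC δ α = z ∧ 1 ≤ z := by
  obtain ⟨z, hz⟩ := C.pairC_int (C.pos_subset hδ) (C.pos_subset hα)
  refine ⟨z, hz, ?_⟩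
  by_contra hlt
  push_neg at hlt
  have hz0 : z ≤ 0 := by omega
  apply C.no_neg_sum (-z).toNat δ hδ (-(reflRoot α δ)) h α hα
  have hzz : ((-z).toNat : ℤ) = -z := Int.toNat_of_nonneg (by omega)
  have hc : ((-z).toNat : ℝ) = -(z:ℝ) := by exact_mod_cast congrArg (fun t : ℤ => (t:ℝ)) hzz
  rw [hc, reflRoot_apply, hz, neg_neg]
  abel

lemma weyl_image {g : V ≃ₗᵢ[ℝ] V} (hg : g ∈ C.weylGroup) : g '' C.roots = C.roots := by
  induction hg using Subgroup.closure_induction with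
  | mem x hx =>
    obtain ⟨α, hα, rfl⟩ := hx
    ext b
    constructor
    · rintro ⟨a, ha, rfl⟩
      exact C.reflect_mem α hα a ha
    · intro hb
      exact ⟨reflRoot α b, C.reflect_mem α hα b hb, reflRoot_invol α b⟩
  | one =>
    rw [show ⇑(1 : V ≃ₗᵢ[ℝ] V) = id from rfl, Set.image_id]
  | mul x y hx hy ihx ihy =>
    rw [show ⇑(x * y) = ⇑x ∘ ⇑y from rfl, Set.image_comp, ihy, ihx]
  | inv x hx ih =>
    nth_rewrite 1 [← ih]
    rw [← Set.image_comp]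
    have hc : ⇑x⁻¹ ∘ ⇑x = id := by
      funext a
      show x⁻¹ (x a) = a
      rw [show x⁻¹ = x.symm from rfl]
      exact x.symm_apply_apply a
    rw [hc, Set.image_id]

lemma weyl_mem_roots {g : V ≃ₗᵢ[ℝ] V} (hg : g ∈ C.weylGroup) {α : V}
    (hα : α ∈ C.roots) : g α ∈ C.roots := by
  rw [← C.weyl_image hg]; exact Set.mem_image_of_mem g hα

lemma reflRoot_mem_weyl {α : V} (hα : α ∈ C.roots) : reflRoot α ∈ C.weylGroup :=
  Subgroup.subset_closure ⟨α, hα, rfl⟩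

/-- sum of all positive roots -/
def posSum : V := ∑ δ ∈ C.pos_finite.toFinset, δ

lemma inner_posSum_pos {α : V} (hα : α ∈ C.pos) : 0 < ⟪α, C.posSum⟫ := by
  classical
  have hαr : α ∈ C.roots := C.pos_subset hα
  rw [posSum, inner_sum]
  rw [← Finset.sum_filter_add_sum_filter_not C.pos_finite.toFinset
    (fun δ => -(reflRoot α δ) ∈ C.pos) (fun δ => ⟪α, δ⟫)]
  have hzero : ∑ δ ∈ C.pos_finite.toFinset.filter
      (fun δ => ¬ -(reflRoot α δ) ∈ C.pos), ⟪α, δ⟫ = 0 := by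
    apply Finset.sum_involution (fun δ _ => reflRoot α δ)
    · intro δ hδ
      have : ⟪α, reflRoot α δ⟫ = -⟪α, δ⟫ := by
        rw [reflRoot_inner', reflRoot_self, inner_neg_left]
      rw [this]; ring
    · intro δ hδ hne heq
      apply hne
      have h0 : pairC δ α • α = 0 := by
        have := reflRoot_apply α δ
        rw [heq] at this
        have h1 : δ - pairC δ α • α = δ := this.symm
        have := sub_eq_self.mp h1
        exact this
      have h1 : pairC δ α = 0 := by
        rcases smul_eq_zero.1 h0 with h | h
        · exact h
        · exact absurd h (C.nonzero α hαr)
      have h2 : ⟪δ, α⟫ = 0 := by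
        rw [pairC] at h1
        rcases div_eq_zero_iff.1 h1 with h | h
        · linarith
        · exact absurd h (ne_of_gt (C.inner_self_pos hαr))
      rw [real_inner_comm]
      exact h2
    · intro δ hδ
      simp only [Finset.mem_filter, Set.Finite.mem_toFinset] at hδ ⊢
      obtain ⟨hδp, hδn⟩ := hδ
      have hδr : δ ∈ C.roots := C.pos_subset hδp
      have htr : reflRoot α δ ∈ C.roots := C.reflect_mem α hαr δ hδr
      have htp : reflRoot α δ ∈ C.pos := by
        rcases C.mem_pos_or _ htr with h | h
        · exact h
        · exact absurd h hδn
      refine ⟨htp, ?_⟩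
      rw [reflRoot_invol]
      intro hcon
      exact C.not_pos_and_neg δ hδp hcon
    · intro δ hδ
      exact reflRoot_invol α δ
  rw [hzero, add_zero]
  apply Finset.sum_pos
  · intro δ hδ
    simp only [Finset.mem_filter, Set.Finite.mem_toFinset] at hδ
    obtain ⟨hδp, hδn⟩ := hδ
    obtain ⟨z, hz, hz1⟩ := C.pairC_ge_one_of_inv hα hδp hδn
    have : 0 < pairC δ α := by rw [hz]; exact_mod_cast (by omega : (0:ℤ) < z)
    have := (C.pairC_pos_iff hαr).1 this
    rwa [real_inner_comm]
  · refine ⟨α, ?_⟩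
    simp only [Finset.mem_filter, Set.Finite.mem_toFinset]
    refine ⟨hα, ?_⟩
    rw [reflRoot_self, neg_neg]
    exact hα

/-- strong induction on positive roots by the value of `⟪·, posSum⟫` -/
lemma pos_induction (P : V → Prop)
    (step : ∀ β ∈ C.pos, (∀ γ ∈ C.pos, ⟪γ, C.posSum⟫ < ⟪β, C.posSum⟫ → P γ) → P β) :
    ∀ β ∈ C.pos, P β := by
  have key : ∀ n : ℕ, ∀ β ∈ C.pos,
      {δ ∈ C.pos | ⟪δ, C.posSum⟫ < ⟪β, C.posSum⟫}.ncard = n → P β := by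
    intro n
    induction n using Nat.strong_induction_on with
    | _ n ih =>
      intro β hβ hn
      apply step β hβ
      intro γ hγ hlt
      apply ih {δ ∈ C.pos | ⟪δ, C.posSum⟫ < ⟪γ, C.posSum⟫}.ncard _ γ hγ rfl
      rw [← hn]
      apply Set.ncard_lt_ncard _ (C.pos_finite.subset (fun x hx => hx.1))
      constructor
      · intro x hx
        exact ⟨hx.1, lt_trans hx.2 hlt⟩
      · intro hsub
        have := hsub ⟨hγ, hlt⟩
        exact absurd this.2 (lt_irrefl _)
  intro β hβ
  exact key _ β hβ rfl

lemma simple_mem_pos {α : V} (hα : α ∈ C.simpleRoots) : α ∈ C.pos := hα.1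

lemma not_decomp {α : V} (hα : α ∈ C.simpleRoots) :
    ¬ ∃ β ∈ C.pos, ∃ γ ∈ C.pos, α = β + γ := hα.2

/-- if `β` is positive, not equal to the simple root `α`, and `⟨β,α∨⟩ ≥ 2`,
then `β - α` is a positive root. -/
lemma sub_simple_pos {α β : V} (hα : α ∈ C.simpleRoots) (hβ : β ∈ C.pos) (hβα : β ≠ α)
    {za : ℤ} (hza : pairC β α = za) (h2 : 2 ≤ za) : β - α ∈ C.pos := by
  have hαp := C.simple_mem_pos hα
  have hαr : α ∈ C.roots := C.pos_subset hαp
  have hβr : β ∈ C.roots := C.pos_subset hβ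
  have hβnα : β ≠ -α := fun h => C.not_pos_and_neg α hαp (h ▸ hβ)
  have hβα' : ⟪β, α⟫ > 0 := by
    apply (C.pairC_pos_iff hαr).1
    rw [hza]
    exact_mod_cast (by omega : (0:ℤ) < za)
  obtain ⟨zc, hzc⟩ := C.pairC_int hαr hβr
  have hzc1 : 1 ≤ zc := by
    have : 0 < pairC α β := (C.pairC_pos_iff hβr).2 (by rwa [real_inner_comm])
    rw [hzc] at this
    exact_mod_cast this
  have hprod : zc * za < 4 := by
    have := C.pairC_mul_lt_four hαr hβr (Ne.symm hβα)
      (fun h => hβnα (by rw [h]; simp))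
    rw [hzc, hza] at this
    exact_mod_cast this
  have hzc_eq : zc = 1 := by nlinarith
  have hroot : α - β ∈ C.roots := by
    have := C.reflect_mem β hβr α hαr
    rw [reflRoot_apply, hzc, hzc_eq] at this
    simpa using this
  have hnp : α - β ∉ C.pos := by
    intro hp
    exact C.not_decomp hα ⟨β, hβ, α - β, hp, by abel⟩
  have := C.mem_pos_or (α - β) hroot
  rcases this with h | h
  · exact absurd h hnp
  · rwa [neg_sub] at h

lemma simple_descent {α : V} (hα : α ∈ C.simpleRoots) :
    ∀ n : ℕ, ∀ β ∈ C.pos, ∀ δ ∈ C.pos, β ≠ α → δ ≠ α →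
      β + δ = ((n : ℝ) + 1) • α → False := by
  have hαp := C.simple_mem_pos hα
  have hαr : α ∈ C.roots := C.pos_subset hαp
  intro n
  induction n with
  | zero =>
    intro β hβ δ hδ hβα hδα h
    exact C.not_decomp hα ⟨β, hβ, δ, hδ, by rw [h]; norm_num⟩
  | succ n ih =>
    intro β hβ δ hδ hβα hδα h
    push_cast at h
    have hβr : β ∈ C.roots := C.pos_subset hβ
    have hδr : δ ∈ C.roots := C.pos_subset hδ
    obtain ⟨za, hza⟩ := C.pairC_int hβr hαr
    obtain ⟨zb, hzb⟩ := C.pairC_int hδr hαr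
    have hαα := C.inner_self_pos hαr
    have h2 : ⟪β, α⟫ + ⟪δ, α⟫ = ((n:ℝ) + 1 + 1) * ⟪α, α⟫ := by
      rw [← inner_add_left, h, real_inner_smul_left]
    have hsum : (za : ℝ) + zb = 2 * ((n:ℝ) + 2) := by
      rw [← hza, ← hzb, pairC, pairC, ← add_div, div_eq_iff (ne_of_gt hαα)]
      linarith
    have hzsum : za + zb = 2 * (n + 2) := by exact_mod_cast hsum
    have hcase : 2 ≤ za ∨ 2 ≤ zb := by omega
    rcases hcase with hc | hc
    · have hβ' := C.sub_simple_pos hα hβ hβα hza hc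
      apply ih (β - α) hβ' δ hδ ?_ hδα ?_
      · intro he
        have : β = (2:ℝ) • α := by
          rw [show β = (β - α) + α by abel, he, two_smul]
        rcases C.reduced α hαr 2 (this ▸ hβr) with h' | h' <;> norm_num at h'
      · rw [show β - α + δ = (β + δ) - α by abel, h]
        module
    · have hδ' := C.sub_simple_pos hα hδ hδα hzb hc
      apply ih β hβ (δ - α) hδ' hβα ?_ ?_
      · intro he
        have : δ = (2:ℝ) • α := by
          rw [show δ = (δ - α) + α by abel, he, two_smul]
        rcases C.reduced α hαr 2 (this ▸ hδr) with h' | h' <;> norm_num at h'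
      · rw [show β + (δ - α) = (β + δ) - α by abel, h]
        module

lemma reflRoot_simple_pos {α β : V} (hα : α ∈ C.simpleRoots) (hβ : β ∈ C.pos)
    (hne : β ≠ α) : reflRoot α β ∈ C.pos := by
  have hαp := C.simple_mem_pos hα
  have hαr : α ∈ C.roots := C.pos_subset hαp
  have hβr : β ∈ C.roots := C.pos_subset hβ
  have htr : reflRoot α β ∈ C.roots := C.reflect_mem α hαr β hβr
  by_contra hnp
  have hδ : -(reflRoot α β) ∈ C.pos := (C.mem_pos_or _ htr).resolve_left hnp
  obtain ⟨z, hz, hz1⟩ := C.pairC_ge_one_of_inv hαp hβ hδ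
  have hδα : -(reflRoot α β) ≠ α := by
    intro he
    apply hne
    have h1 : reflRoot α β = -α := neg_eq_iff_eq_neg.mp he
    have := congrArg (reflRoot α) h1
    rw [reflRoot_invol, map_neg, reflRoot_self, neg_neg] at this
    exact this
  apply C.simple_descent hα (z - 1).toNat β hβ (-(reflRoot α β)) hδ hne hδα
  have hcast : (((z-1).toNat : ℕ) : ℝ) + 1 = (z : ℝ) := by
    have : (((z-1).toNat : ℕ) : ℤ) = z - 1 := Int.toNat_of_nonneg (by omega)
    have h2 : (((z-1).toNat : ℕ) : ℝ) = ((z:ℝ) - 1) := by exact_mod_cast congrArg (fun t : ℤ => (t:ℝ)) this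
    rw [h2]; ring
  rw [hcast, reflRoot_apply, hz]
  abel

lemma exists_simple_decomp : ∀ β ∈ C.pos, ∃ m : Multiset V, m ≠ 0 ∧
    (∀ x ∈ m, x ∈ C.simpleRoots) ∧ m.sum = β := by
  apply C.pos_induction
  intro β hβ ih
  by_cases hs : β ∈ C.simpleRoots
  · exact ⟨{β}, by simp, by simpa using hs, by simp⟩
  · have hdec : ∃ γ ∈ C.pos, ∃ δ ∈ C.pos, β = γ + δ := by
      by_contra hc
      exact hs ⟨hβ, hc⟩
    obtain ⟨γ, hγ, δ, hδ, hβeq⟩ := hdec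
    have hγm : ⟪γ, C.posSum⟫ < ⟪β, C.posSum⟫ := by
      have := C.inner_posSum_pos hδ
      rw [hβeq, inner_add_left]
      linarith
    have hδm : ⟪δ, C.posSum⟫ < ⟪β, C.posSum⟫ := by
      have := C.inner_posSum_pos hγ
      rw [hβeq, inner_add_left]
      linarith
    obtain ⟨m1, hm1ne, hm1s, hm1sum⟩ := ih γ hγ hγm
    obtain ⟨m2, hm2ne, hm2s, hm2sum⟩ := ih δ hδ hδm
    refine ⟨m1 + m2, by simp [hm1ne], ?_, by rw [Multiset.sum_add, hm1sum, hm2sum, hβeq]⟩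
    intro x hx
    rcases Multiset.mem_add.1 hx with h | h
    · exact hm1s x h
    · exact hm2s x h

lemma inner_simple_nonneg {l : V} (hl : C.IsDominant l) {α : V} (hα : α ∈ C.simpleRoots) :
    0 ≤ ⟪l, α⟫ := by
  obtain ⟨k, hk⟩ := hl α hα
  have hαα := C.inner_self_pos (C.pos_subset (C.simple_mem_pos hα))
  rw [div_eq_iff (ne_of_gt hαα)] at hk
  nlinarith [mul_nonneg (Nat.cast_nonneg (α := ℝ) k) (le_of_lt hαα)]

lemma dominant_inner_nonneg {l : V} (hl : C.IsDominant l) :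
    ∀ β ∈ C.pos, 0 ≤ ⟪l, β⟫ := by
  intro β hβ
  obtain ⟨m, hne, hs, hsum⟩ := C.exists_simple_decomp β hβ
  rw [← hsum]
  clear hsum hne hβ
  induction m using Multiset.induction with
  | empty => simp
  | cons a s ih =>
    rw [Multiset.sum_cons, inner_add_right]
    have h1 := C.inner_simple_nonneg hl (hs a (Multiset.mem_cons_self a s))
    have h2 := ih (fun x hx => hs x (Multiset.mem_cons_of_mem hx))
    linarith

lemma dominant_pairC_int {l : V} (hl : C.IsDominant l) :
    ∀ β ∈ C.pos, ∃ z : ℤ, pairC l β = z := by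
  apply C.pos_induction
  intro β hβ ih
  have hβr := C.pos_subset hβ
  have hββ := C.inner_self_pos hβr
  obtain ⟨m, hne, hs, hsum⟩ := C.exists_simple_decomp β hβ
  obtain ⟨α, hαm, hβα⟩ := multiset_exists_inner_pos (by rw [hsum]; exact hββ)
  have hα : α ∈ C.simpleRoots := hs α hαm
  have hαr := C.pos_subset hα.1
  have hαα := C.inner_self_pos hαr
  obtain ⟨k, hk⟩ := hl α hα
  by_cases hbe : β = α
  · refine ⟨(k:ℤ), ?_⟩
    rw [hbe]
    show 2 * ⟪l, α⟫ / ⟪α, α⟫ = ((k:ℤ):ℝ)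
    rw [hk]; push_cast; ring
  · obtain ⟨z, hz⟩ := C.pairC_int hβr hαr
    have hz1 : 1 ≤ z := by
      have h0 : 0 < pairC β α := (C.pairC_pos_iff hαr).2 hβα
      rw [hz] at h0
      exact_mod_cast h0
    have hγp : reflRoot α β ∈ C.pos := C.reflRoot_simple_pos hα hβ hbe
    set γ := reflRoot α β with hγdef
    have hγeq : γ = β - (z:ℝ) • α := by rw [hγdef, reflRoot_apply, hz]
    have hγm : ⟪γ, C.posSum⟫ < ⟪β, C.posSum⟫ := by
      rw [hγeq, inner_sub_left, real_inner_smul_left]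
      have h1 := C.inner_posSum_pos hα.1
      have h2 : (1:ℝ) ≤ z := by exact_mod_cast hz1
      nlinarith
    obtain ⟨zg, hzg⟩ := ih γ hγp hγm
    obtain ⟨zc, hzc⟩ := C.pairC_int hαr (C.pos_subset hγp)
    refine ⟨zg - zc * (k:ℤ), ?_⟩
    have hγγ : ⟪γ, γ⟫ = ⟪β, β⟫ := reflRoot_inner α β β
    have hγγpos : (0:ℝ) < ⟪γ, γ⟫ := by rw [hγγ]; exact hββ
    have e1 : 2 * ⟪β, α⟫ = (z:ℝ) * ⟪α, α⟫ := by
      rw [pairC, div_eq_iff (ne_of_gt hαα)] at hz; linarith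
    have e2 : 2 * ⟪α, γ⟫ = (zc:ℝ) * ⟪γ, γ⟫ := by
      rw [pairC, div_eq_iff (ne_of_gt hγγpos)] at hzc; linarith
    have e3 : 2 * ⟪l, α⟫ = (k:ℝ) * ⟪α, α⟫ := by
      rw [div_eq_iff (ne_of_gt hαα)] at hk; linarith
    have e4 : 2 * ⟪l, γ⟫ = (zg:ℝ) * ⟪γ, γ⟫ := by
      rw [pairC, div_eq_iff (ne_of_gt hγγpos)] at hzg; linarith
    have e5 : ⟪l, γ⟫ = ⟪l, β⟫ - (z:ℝ) * ⟪l, α⟫ := by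
      rw [hγeq, inner_sub_right, real_inner_smul_right]
    have e6 : ⟪α, γ⟫ = ⟪α, β⟫ - (z:ℝ) * ⟪α, α⟫ := by
      rw [hγeq, inner_sub_right, real_inner_smul_right]
    have e7 : ⟪β, α⟫ = ⟪α, β⟫ := real_inner_comm α β
    rw [pairC, div_eq_iff (ne_of_gt hββ)]
    push_cast
    linear_combination e4 - 2*e5 + (z:ℝ)*e3 - (k:ℝ)*e2 + 2*(k:ℝ)*e6 - 2*(k:ℝ)*e7
      + (k:ℝ)*e1 + ((zg:ℝ) - (zc:ℝ)*(k:ℝ))*hγγ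

lemma dominant_pairC_nat {l : V} (hl : C.IsDominant l) :
    ∀ β ∈ C.pos, ∃ k : ℕ, pairC l β = k := by
  intro β hβ
  obtain ⟨z, hz⟩ := C.dominant_pairC_int hl β hβ
  have hββ := C.inner_self_pos (C.pos_subset hβ)
  have hnn : 0 ≤ pairC l β := by
    rw [pairC]
    apply div_nonneg _ (le_of_lt hββ)
    have := C.dominant_inner_nonneg hl β hβ
    linarith
  have hz0 : 0 ≤ z := by rw [hz] at hnn; exact_mod_cast hnn
  refine ⟨z.toNat, ?_⟩
  rw [hz]
  congr 1
  omega

/-- if right-multiplying by `s_α` (α positive) increases length, then `x α` is positive -/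
lemma pos_of_lt_invLen {x : V ≃ₗᵢ[ℝ] V} (hx : x ∈ C.weylGroup) {α : V} (hα : α ∈ C.pos)
    (hlen : invLen C.pos x < invLen C.pos (x * reflRoot α)) : x α ∈ C.pos := by
  by_contra hneg
  have hαr : α ∈ C.roots := C.pos_subset hα
  have hxr : ∀ γ, γ ∈ C.roots → x γ ∈ C.roots := fun γ hγ => C.weyl_mem_roots hx hγ
  have htr : ∀ γ, γ ∈ C.roots → reflRoot α γ ∈ C.roots := fun γ hγ => C.reflect_mem α hαr γ hγ
  have hxαneg : -(x α) ∈ C.pos := (C.mem_pos_or _ (hxr α hαr)).resolve_left hneg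
  set t := reflRoot α with htdef
  set A := invSet C.pos t with hA
  set Ix := invSet C.pos x with hIx
  set Ixt := invSet C.pos (x * t) with hIxt
  have happ : ∀ γ, (x * t) γ = x (t γ) := fun γ => rfl
  have hposfin := C.pos_finite
  have hAfin : A.Finite := hposfin.subset (fun γ hγ => hγ.1)
  have hIxfin : Ix.Finite := hposfin.subset (fun γ hγ => hγ.1)
  have hIxtfin : Ixt.Finite := hposfin.subset (fun γ hγ => hγ.1)
  -- A is stable under δ ↦ -(t δ)
  have hntA : ∀ δ, δ ∈ A → -(t δ) ∈ A := by
    intro δ hδ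
    refine ⟨hδ.2, ?_⟩
    rw [map_neg, htdef, reflRoot_invol, neg_neg]
    exact hδ.1
  -- image computation 1
  have himg1 : (⇑t) '' (Ixt \ A) = Ix \ A := by
    ext b
    constructor
    · rintro ⟨γ, ⟨⟨hγp, hγi⟩, hγnA⟩, rfl⟩
      have htγp : t γ ∈ C.pos := by
        rcases C.mem_pos_or _ (htr γ (C.pos_subset hγp)) with h | h
        · exact h
        · exact absurd ⟨hγp, h⟩ hγnA
      refine ⟨⟨htγp, by rw [← happ]; exact hγi⟩, ?_⟩
      rintro ⟨-, hcon⟩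
      rw [htdef, reflRoot_invol] at hcon
      exact C.not_pos_and_neg γ hγp hcon
    · rintro ⟨⟨hbp, hbi⟩, hbnA⟩
      have htbp : t b ∈ C.pos := by
        rcases C.mem_pos_or _ (htr b (C.pos_subset hbp)) with h | h
        · exact h
        · exact absurd ⟨hbp, h⟩ hbnA
      refine ⟨t b, ⟨⟨htbp, ?_⟩, ?_⟩, by rw [htdef, reflRoot_invol]⟩
      · rw [happ, htdef, reflRoot_invol]
        exact hbi
      · rintro ⟨-, hcon⟩
        rw [htdef, reflRoot_invol] at hcon
        exact C.not_pos_and_neg b hbp hcon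
  -- image computation 2
  have himg2 : (fun δ => -(t δ)) '' (Ixt ∩ A) = A \ Ix := by
    ext b
    constructor
    · rintro ⟨γ, ⟨⟨hγp, hγi⟩, hγA⟩, rfl⟩
      refine ⟨hntA γ hγA, ?_⟩
      rintro ⟨-, hcon⟩
      rw [map_neg, neg_neg, ← happ] at hcon
      exact C.not_pos_and_neg _ hγi (by rw [neg_neg]; exact hcon)
    · rintro ⟨hbA, hbnI⟩
      refine ⟨-(t b), ⟨⟨hbA.2, ?_⟩, hntA b hbA⟩, ?_⟩
      · have hh : (x * t) (-(t b)) = -(x b) := by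
          rw [happ, map_neg, htdef, reflRoot_invol, map_neg]
        rw [hh, neg_neg]
        rcases C.mem_pos_or _ (hxr b (C.pos_subset hbA.1)) with h | h
        · exact h
        · exact absurd ⟨hbA.1, h⟩ hbnI
      · show -(t (-(t b))) = b
        rw [map_neg, neg_neg, htdef, reflRoot_invol]
  have hinjt : Set.InjOn (⇑t) (Ixt \ A) := (t.injective).injOn
  have hinjnt : Set.InjOn (fun δ => -(t δ)) (Ixt ∩ A) :=
    (neg_injective.comp t.injective).injOn
  have hc1 : (Ixt \ A).ncard = (Ix \ A).ncard := by
    rw [← himg1, Set.ncard_image_of_injOn hinjt]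
  have hc2 : (Ixt ∩ A).ncard = (A \ Ix).ncard := by
    rw [← himg2, Set.ncard_image_of_injOn hinjnt]
  have hsplit1 : (Ixt ∩ A).ncard + (Ixt \ A).ncard = invLen C.pos (x * t) :=
    Set.ncard_inter_add_ncard_diff_eq_ncard Ixt A hIxtfin
  have hsplit2 : (Ix ∩ A).ncard + (Ix \ A).ncard = invLen C.pos x :=
    Set.ncard_inter_add_ncard_diff_eq_ncard Ix A hIxfin
  have hkey : (Ix ∩ A).ncard < (A \ Ix).ncard := by omega
  -- now build an injection from A \ Ix into Ix ∩ A
  have hmaps : ∀ δ ∈ A \ Ix, -(t δ) ∈ Ix ∩ A := by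
    rintro δ ⟨hδA, hδnI⟩
    have hδp : δ ∈ C.pos := hδA.1
    have hxδp : x δ ∈ C.pos := by
      rcases C.mem_pos_or _ (hxr δ (C.pos_subset hδp)) with h | h
      · exact h
      · exact absurd ⟨hδp, h⟩ hδnI
    obtain ⟨z, hz, hz1⟩ := C.pairC_ge_one_of_inv hα hδp hδA.2
    have hadd : δ + -(t δ) = (z:ℝ) • α := by
      rw [htdef, reflRoot_apply, hz]; abel
    have hμA : -(t δ) ∈ A := hntA δ hδA
    have hxμ : x (-(t δ)) ∉ C.pos := by
      intro hxμp
      apply C.no_neg_sum z.toNat (x δ) hxδp (x (-(t δ))) hxμp (-(x α)) hxαneg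
      have : x δ + x (-(t δ)) = (z:ℝ) • x α := by
        rw [← map_add, hadd, map_smul]
      rw [this]
      have hcast : ((z.toNat:ℕ):ℝ) = (z:ℝ) := by
        have : ((z.toNat:ℕ):ℤ) = z := Int.toNat_of_nonneg (by omega)
        exact_mod_cast congrArg (fun u : ℤ => (u:ℝ)) this
      rw [hcast]
      module
    refine ⟨⟨hμA.1, ?_⟩, hμA⟩
    rcases C.mem_pos_or _ (hxr _ (C.pos_subset hμA.1)) with h | h
    · exact absurd h hxμ
    · exact h
  have hle : (A \ Ix).ncard ≤ (Ix ∩ A).ncard :=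
    Set.ncard_le_ncard_of_injOn (fun δ => -(t δ)) hmaps
      ((neg_injective.comp t.injective).injOn)
      (hposfin.subset (fun γ hγ => hγ.1.1))
  omega

end RootSystemCtx

end Aux

/-- if `w ≤ wu` in the Bruhat order and `λ` is a dominant integral weight,
then `w(λ - uλ)` is a nonnegative integer linear combination of positive roots. -/
theorem statement4 {V : Type*} [NormedAddCommGroup V] [InnerProductSpace ℝ V]
    [FiniteDimensional ℝ V] (C : RootSystemCtx V)
    (w u : V ≃ₗᵢ[ℝ] V) (hw : w ∈ C.weylGroup) (hu : u ∈ C.weylGroup)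
    (hle : bruhatLE C.roots C.pos w (w * u))
    (l : V) (hl : C.IsDominant l) :
    ∃ (s : Finset V) (c : V → ℕ), ↑s ⊆ C.pos ∧
      w (l - u l) = ∑ α ∈ s, (c α : ℝ) • α := by
  classical
  have addlem : ∀ v₁ v₂ : V,
      (∃ (s : Finset V) (c : V → ℕ), ↑s ⊆ C.pos ∧ v₁ = ∑ α ∈ s, (c α : ℝ) • α) →
      (∃ (s : Finset V) (c : V → ℕ), ↑s ⊆ C.pos ∧ v₂ = ∑ α ∈ s, (c α : ℝ) • α) →
      (∃ (s : Finset V) (c : V → ℕ), ↑s ⊆ C.pos ∧ v₁ + v₂ = ∑ α ∈ s, (c α : ℝ) • α) := by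
    rintro v₁ v₂ ⟨s₁, c₁, hs₁, h₁⟩ ⟨s₂, c₂, hs₂, h₂⟩
    refine ⟨s₁ ∪ s₂, fun a => (if a ∈ s₁ then c₁ a else 0) + (if a ∈ s₂ then c₂ a else 0),
      ?_, ?_⟩
    · intro a ha
      rcases Finset.mem_union.1 (by exact_mod_cast ha) with h | h
      · exact hs₁ (by exact_mod_cast h)
      · exact hs₂ (by exact_mod_cast h)
    · have e1 : ∑ a ∈ s₁ ∪ s₂, ((if a ∈ s₁ then c₁ a else 0 : ℕ) : ℝ) • a
          = ∑ a ∈ s₁, (c₁ a : ℝ) • a := by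
        rw [← Finset.sum_subset Finset.subset_union_left
          (fun a _ ha => by rw [if_neg ha]; simp)]
        exact Finset.sum_congr rfl (fun a ha => by rw [if_pos ha])
      have e2 : ∑ a ∈ s₁ ∪ s₂, ((if a ∈ s₂ then c₂ a else 0 : ℕ) : ℝ) • a
          = ∑ a ∈ s₂, (c₂ a : ℝ) • a := by
        rw [← Finset.sum_subset Finset.subset_union_right
          (fun a _ ha => by rw [if_neg ha]; simp)]
        exact Finset.sum_congr rfl (fun a ha => by rw [if_pos ha])
      rw [h₁, h₂, ← e1, ← e2, ← Finset.sum_add_distrib]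
      exact Finset.sum_congr rfl (fun a _ => by push_cast; rw [add_smul])
  have main : ∀ v, bruhatLE C.roots C.pos w v → (v ∈ C.weylGroup ∧
      ∃ (s : Finset V) (c : V → ℕ), ↑s ⊆ C.pos ∧
        w l - v l = ∑ α ∈ s, (c α : ℝ) • α) := by
    intro v hv
    induction hv with
    | refl => exact ⟨hw, ∅, fun _ => 0, by simp, by simp⟩
    | @tail b c' hab hbc ih =>
      obtain ⟨hbW, s₀, c₀, hs₀, hsum₀⟩ := ih
      obtain ⟨⟨β, hβ, rfl⟩, hlen⟩ := hbc
      obtain ⟨β₀, hβ₀, hrr⟩ : ∃ β₀ ∈ C.pos, reflRoot β = reflRoot β₀ := by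
        rcases C.mem_pos_or β hβ with h | h
        · exact ⟨β, h, rfl⟩
        · exact ⟨-β, h, (reflRoot_neg β).symm⟩
      have hβ₀r := C.pos_subset hβ₀
      have hbW' : b * reflRoot β ∈ C.weylGroup := mul_mem hbW (C.reflRoot_mem_weyl hβ)
      have hbpos : b β₀ ∈ C.pos := C.pos_of_lt_invLen hbW hβ₀ (by rwa [← hrr])
      obtain ⟨k, hk⟩ := C.dominant_pairC_nat hl β₀ hβ₀
      have hterm : b l - (b * reflRoot β) l = (k:ℝ) • (b β₀) := by
        have happ : (b * reflRoot β) l = b (reflRoot β₀ l) := by rw [hrr]; rfl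
        rw [happ, ← map_sub]
        have h2 : l - reflRoot β₀ l = (k:ℝ) • β₀ := by
          rw [reflRoot_apply, show pairC l β₀ = (k:ℝ) from hk]
          abel
        rw [h2, map_smul]
      refine ⟨hbW', ?_⟩
      obtain ⟨s, c, hs, hsum⟩ := addlem (w l - b l) ((k:ℝ) • b β₀)
        ⟨s₀, c₀, hs₀, hsum₀⟩
        ⟨{b β₀}, fun _ => k, by simpa using hbpos, by simp⟩
      refine ⟨s, c, hs, ?_⟩
      rw [show w l - (b * reflRoot β) l
          = (w l - b l) + (b l - (b * reflRoot β) l) by abel, hterm]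
      exact hsum
  obtain ⟨-, s, c, hs, hsum⟩ := main (w * u) hle
  refine ⟨s, c, hs, ?_⟩
  rw [map_sub, show w (u l) = (w * u) l from rfl]
  exact hsum

end
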